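/- Let n be a positive integer such that for every prime q with q ≡ 2 (mod 3) the exponent of q in the prime factorization of n is even. Then the set {(a,b) ∈ ℤ × ℤ : a² + a·b + b² = n} is finite and its cardinality equals 6 · ∏_p (e_p + 1), where the product ranges over all primes p dividing n with p ≡ 1 (mod 3), and e_p denotes the exponent of p in n. -/

import Mathlib

/-- Eisenstein integers `a + b ω` with `ω² + ω + 1 = 0`. -/
@[ext] structure Ei where
  re : ℤ
  im : ℤ
deriving DecidableEq

namespace Ei

instance : Zero Ei := ⟨⟨0, 0⟩⟩
instance : One Ei := ⟨⟨1, 0⟩⟩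
instance : Add Ei := ⟨fun z w => ⟨z.re + w.re, z.im + w.im⟩⟩
instance : Neg Ei := ⟨fun z => ⟨-z.re, -z.im⟩⟩
instance : Mul Ei :=
  ⟨fun z w => ⟨z.re * w.re - z.im * w.im, z.re * w.im + z.im * w.re - z.im * w.im⟩⟩

@[simp] theorem zero_re : (0 : Ei).re = 0 := rfl
@[simp] theorem zero_im : (0 : Ei).im = 0 := rfl
@[simp] theorem one_re : (1 : Ei).re = 1 := rfl
@[simp] theorem one_im : (1 : Ei).im = 0 := rfl
@[simp] theorem add_re (z w : Ei) : (z + w).re = z.re + w.re := rfl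
@[simp] theorem add_im (z w : Ei) : (z + w).im = z.im + w.im := rfl
@[simp] theorem neg_re (z : Ei) : (-z).re = -z.re := rfl
@[simp] theorem neg_im (z : Ei) : (-z).im = -z.im := rfl
@[simp] theorem mul_re (z w : Ei) : (z * w).re = z.re * w.re - z.im * w.im := rfl
@[simp] theorem mul_im (z w : Ei) : (z * w).im = z.re * w.im + z.im * w.re - z.im * w.im := rfl

instance addCommGroup : AddCommGroup Ei := by
  refine
  { add := (· + ·)
    zero := (0 : Ei)
    sub := fun a b => a + -b
    neg := Neg.neg
    nsmul := @nsmulRec Ei ⟨0⟩ ⟨(· + ·)⟩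
    zsmul := @zsmulRec Ei ⟨0⟩ ⟨(· + ·)⟩ ⟨Neg.neg⟩ (@nsmulRec Ei ⟨0⟩ ⟨(· + ·)⟩)
    add_assoc := ?_
    zero_add := ?_
    add_zero := ?_
    neg_add_cancel := ?_
    add_comm := ?_ } <;>
  intros <;> ext <;> simp <;> ring

@[simp] theorem sub_re (z w : Ei) : (z - w).re = z.re - w.re := rfl
@[simp] theorem sub_im (z w : Ei) : (z - w).im = z.im - w.im := rfl

instance addGroupWithOne : AddGroupWithOne Ei :=
  { Ei.addCommGroup with
    natCast := fun n => ⟨n, 0⟩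
    intCast := fun n => ⟨n, 0⟩
    one := 1 }

@[simp] theorem natCast_re (n : ℕ) : (n : Ei).re = n := rfl
@[simp] theorem natCast_im (n : ℕ) : (n : Ei).im = 0 := rfl
@[simp] theorem intCast_re (n : ℤ) : (n : Ei).re = n := rfl
@[simp] theorem intCast_im (n : ℤ) : (n : Ei).im = 0 := rfl

instance commRing : CommRing Ei := by
  refine
  { Ei.addGroupWithOne with
    mul := (· * ·)
    npow := @npowRec Ei ⟨1⟩ ⟨(· * ·)⟩,
    add_comm := ?_
    left_distrib := ?_
    right_distrib := ?_
    zero_mul := ?_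
    mul_zero := ?_
    mul_assoc := ?_
    one_mul := ?_
    mul_one := ?_
    mul_comm := ?_ } <;>
  intros <;> ext <;> simp <;> ring

instance : Nontrivial Ei := ⟨⟨0, 1, by decide⟩⟩

/-- conjugation -/
def conj (z : Ei) : Ei := ⟨z.re - z.im, -z.im⟩

@[simp] theorem conj_re (z : Ei) : (conj z).re = z.re - z.im := rfl
@[simp] theorem conj_im (z : Ei) : (conj z).im = -z.im := rfl

@[simp] theorem conj_conj (z : Ei) : conj (conj z) = z := by ext <;> simp

theorem conj_mul (z w : Ei) : conj (z * w) = conj z * conj w := by ext <;> simp <;> ring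

/-- The norm. -/
def Nm (z : Ei) : ℤ := z.re ^ 2 - z.re * z.im + z.im ^ 2

theorem Nm_mul (z w : Ei) : Nm (z * w) = Nm z * Nm w := by simp [Nm]; ring

theorem Nm_conj (z : Ei) : Nm (conj z) = Nm z := by simp [Nm]; ring

theorem Nm_nonneg (z : Ei) : 0 ≤ Nm z := by
  have := sq_nonneg (2 * z.re - z.im); have := sq_nonneg z.im
  simp only [Nm]; nlinarith

theorem mul_conj (z : Ei) : z * conj z = (Nm z : Ei) := by
  ext <;> simp only [mul_re, mul_im, conj_re, conj_im, intCast_re, intCast_im, Nm] <;> ring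

theorem Nm_eq_zero {z : Ei} : Nm z = 0 ↔ z = 0 := by
  constructor
  · intro h
    have h1 := sq_nonneg (2 * z.re - z.im); have h2 := sq_nonneg z.im
    have h3 := sq_nonneg (2 * z.im - z.re); have h4 := sq_nonneg z.re
    simp only [Nm] at h
    ext <;> simp <;> nlinarith
  · rintro rfl; simp [Nm]

theorem Nm_pos {z : Ei} (hz : z ≠ 0) : 0 < Nm z :=
  lt_of_le_of_ne (Nm_nonneg z) (fun h => hz (Nm_eq_zero.mp h.symm))

end Ei
namespace Ei

theorem isUnit_iff {z : Ei} : IsUnit z ↔ Nm z = 1 := by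
  constructor
  · rintro ⟨u, rfl⟩
    have h := Nm_mul (u : Ei) ((u⁻¹ : Eiˣ) : Ei)
    rw [Units.mul_inv] at h
    have h1 : Nm (1 : Ei) = 1 := by simp [Nm]
    have := Nm_nonneg (u : Ei); have := Nm_nonneg ((u⁻¹ : Eiˣ) : Ei)
    have hd : Nm (u : Ei) ∣ 1 := Dvd.intro _ (by rw [← h, h1])
    rcases Int.isUnit_iff.mp (isUnit_of_dvd_one hd) with h' | h'
    · exact h'
    · omega
  · intro h
    exact IsUnit.of_mul_eq_one (a := z) (conj z) (by rw [mul_conj, h]; rfl)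

theorem Nm_eq_one_iff {z : Ei} :
    Nm z = 1 ↔ z = ⟨1, 0⟩ ∨ z = ⟨-1, 0⟩ ∨ z = ⟨0, 1⟩ ∨ z = ⟨0, -1⟩ ∨
      z = ⟨1, 1⟩ ∨ z = ⟨-1, -1⟩ := by
  obtain ⟨a, b⟩ := z
  simp only [Nm, Ei.mk.injEq]
  constructor
  · intro h
    have h4 : (2 * a - b) ^ 2 + 3 * b ^ 2 = 4 := by linear_combination 4 * h
    have hb1 : -1 ≤ b := by nlinarith [sq_nonneg (2 * a - b)]
    have hb2 : b ≤ 1 := by nlinarith [sq_nonneg (2 * a - b)]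
    have ha1 : -1 ≤ a := by nlinarith [sq_nonneg (2 * b - a)]
    have ha2 : a ≤ 1 := by nlinarith [sq_nonneg (2 * b - a)]
    interval_cases a <;> interval_cases b <;> omega
  · rintro (⟨rfl, rfl⟩ | ⟨rfl, rfl⟩ | ⟨rfl, rfl⟩ | ⟨rfl, rfl⟩ | ⟨rfl, rfl⟩ | ⟨rfl, rfl⟩) <;> ring

-- Euclidean structure
instance : Div Ei :=
  ⟨fun x y => ⟨round (((x * conj y).re : ℚ) / (Nm y : ℚ)),
               round (((x * conj y).im : ℚ) / (Nm y : ℚ))⟩⟩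

theorem div_def (x y : Ei) : x / y =
    ⟨round (((x * conj y).re : ℚ) / (Nm y : ℚ)),
     round (((x * conj y).im : ℚ) / (Nm y : ℚ))⟩ := rfl

instance : Mod Ei := ⟨fun x y => x - y * (x / y)⟩

theorem mod_def (x y : Ei) : x % y = x - y * (x / y) := rfl

theorem round_bound (u n : ℤ) (hn : 0 < n) :
    2 * |u - n * round ((u : ℚ) / (n : ℚ))| ≤ n := by
  set q : ℤ := round ((u : ℚ) / (n : ℚ)) with hq
  have h1 : |(u : ℚ) / (n : ℚ) - q| ≤ 1 / 2 := abs_sub_round _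
  have hn' : (0 : ℚ) < (n : ℚ) := by exact_mod_cast hn
  have h2 : |(u : ℚ) - n * q| = (n : ℚ) * |(u : ℚ) / n - q| := by
    rw [show (u : ℚ) - n * q = n * ((u : ℚ) / n - q) by field_simp, abs_mul, abs_of_pos hn']
  have h3 : 2 * |(u : ℚ) - n * q| ≤ (n : ℚ) := by rw [h2]; nlinarith
  rw [show (2 * |u - n * q| ≤ n) ↔ ((2 * |u - n * q| : ℤ) : ℚ) ≤ ((n : ℤ) : ℚ) from (Int.cast_le).symm]
  push_cast
  exact h3

theorem Nm_mod_lt (x : Ei) {y : Ei} (hy : y ≠ 0) : Nm (x % y) < Nm y := by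
  have hn : 0 < Nm y := Nm_pos hy
  set q : Ei := x / y with hqdef
  have key : Nm (x % y) * Nm y = Nm (x * conj y - q * (Nm y : Ei)) := by
    rw [← Nm_conj y, ← Nm_mul]
    congr 1
    rw [mod_def, Nm_conj]
    have : (x - y * q) * conj y = x * conj y - q * (y * conj y) := by ring
    rw [this, mul_conj]
  have hre : (x * conj y - q * (Nm y : Ei)).re = (x * conj y).re - Nm y * q.re := by
    simp; ring
  have him : (x * conj y - q * (Nm y : Ei)).im = (x * conj y).im - Nm y * q.im := by
    simp; ring
  set r1 : ℤ := (x * conj y).re - Nm y * q.re with hr1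
  set r2 : ℤ := (x * conj y).im - Nm y * q.im with hr2
  have hb1 : 2 * |r1| ≤ Nm y := by
    rw [hr1]; exact round_bound ((x * conj y).re) (Nm y) hn
  have hb2 : 2 * |r2| ≤ Nm y := by
    rw [hr2]; exact round_bound ((x * conj y).im) (Nm y) hn
  have hNr : Nm (x * conj y - q * (Nm y : Ei)) = r1 ^ 2 - r1 * r2 + r2 ^ 2 := by
    rw [Nm, hre, him]
  have hfinal : r1 ^ 2 - r1 * r2 + r2 ^ 2 < Nm y * Nm y := by
    have e1 : (2 * |r1|) * (2 * |r1|) ≤ Nm y * Nm y :=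
      mul_le_mul hb1 hb1 (by positivity) (le_of_lt hn)
    have e2 : (2 * |r2|) * (2 * |r2|) ≤ Nm y * Nm y :=
      mul_le_mul hb2 hb2 (by positivity) (le_of_lt hn)
    have e3 : (2 * |r1|) * (2 * |r2|) ≤ Nm y * Nm y :=
      mul_le_mul hb1 hb2 (by positivity) (le_of_lt hn)
    nlinarith [sq_abs r1, sq_abs r2, abs_mul r1 r2, neg_abs_le (r1 * r2)]
  have hlt : Nm (x % y) * Nm y < Nm y * Nm y := by rw [key, hNr]; exact hfinal
  exact lt_of_mul_lt_mul_right hlt (le_of_lt hn)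

theorem natAbs_Nm_mod_lt (x : Ei) {y : Ei} (hy : y ≠ 0) :
    (Nm (x % y)).natAbs < (Nm y).natAbs := by
  have h := Nm_mod_lt x hy
  have h1 := Nm_nonneg (x % y); have h2 := Nm_nonneg y
  omega

theorem natAbs_Nm_le_mul (x : Ei) {y : Ei} (hy : y ≠ 0) :
    (Nm x).natAbs ≤ (Nm (x * y)).natAbs := by
  rw [Nm_mul, Int.natAbs_mul]
  have := Nm_pos hy
  have h2 : 1 ≤ (Nm y).natAbs := by omega
  exact Nat.le_mul_of_pos_right _ (by omega)

instance : EuclideanDomain Ei :=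
  { Ei.commRing, (inferInstance : Nontrivial Ei) with
    quotient := (· / ·)
    remainder := (· % ·)
    quotient_zero := fun x => by
      show x / 0 = 0
      rw [div_def]
      have h0 : Nm (0 : Ei) = 0 := by simp [Nm]
      rw [h0]
      norm_num
      rfl
    quotient_mul_add_remainder_eq := fun x y => by
      show y * (x / y) + x % y = x
      rw [mod_def]; ring
    r := fun a b => (Nm a).natAbs < (Nm b).natAbs
    r_wellFounded := (measure fun z : Ei => (Nm z).natAbs).wf
    remainder_lt := fun x y hy => natAbs_Nm_mod_lt x hy
    mul_left_not_lt := fun a b hb => not_lt_of_ge (natAbs_Nm_le_mul a hb) }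

theorem prime_of_Nm_prime {z : Ei} (hz : Nat.Prime (Nm z).natAbs) : Prime z := by
  have hirr : Irreducible z := by
    constructor
    · intro hu
      rw [isUnit_iff.mp hu] at hz
      norm_num at hz
    · intro a b hab
      have hN : (Nm a).natAbs * (Nm b).natAbs = (Nm z).natAbs := by
        rw [← Int.natAbs_mul, ← Nm_mul, ← hab]
      have ha0 := Nm_nonneg a; have hb0 := Nm_nonneg b
      have hd : (Nm a).natAbs ∣ (Nm z).natAbs := ⟨_, hN.symm⟩
      rcases hz.eq_one_or_self_of_dvd _ hd with h1 | h1
      · left; exact isUnit_iff.mpr (by omega)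
      · right
        have hb1 : (Nm b).natAbs = 1 := by
          have := hz.pos
          rw [h1] at hN
          nlinarith [hN]
        exact isUnit_iff.mpr (by omega)
  exact irreducible_iff_prime.mp hirr

end Ei
section NT

lemma cube_aux {p : ℕ} (hp : p.Prime) (hp3 : p ≠ 3) {s : ZMod p} (hs : s ^ 2 + s + 1 = 0) :
    p % 3 = 1 := by
  haveI : Fact p.Prime := ⟨hp⟩
  have hs1 : s ≠ 1 := by
    rintro rfl
    have h3 : ((3 : ℕ) : ZMod p) = 0 := by push_cast; linear_combination hs
    have hd := (ZMod.natCast_eq_zero_iff 3 p).mp h3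
    exact hp3 ((Nat.prime_dvd_prime_iff_eq hp (by norm_num)).mp hd)
  have hs3 : s ^ 3 = 1 := by linear_combination (s - 1) * hs
  have hu : IsUnit s := IsUnit.of_mul_eq_one (a := s) (s ^ 2) (by linear_combination hs3)
  obtain ⟨u, rfl⟩ := hu
  have hu3 : u ^ 3 = 1 := Units.ext (by push_cast; exact hs3)
  have hord : orderOf u = 3 :=
    orderOf_eq_prime hu3 (fun h => hs1 (by rw [h]; rfl))
  have hdvd : 3 ∣ Fintype.card (ZMod p)ˣ := hord ▸ orderOf_dvd_card
  rw [ZMod.card_units] at hdvd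
  have := hp.two_le
  omega

lemma exists_cube_root {p : ℕ} (hp : p.Prime) (h1 : p % 3 = 1) :
    ∃ s : ZMod p, s ^ 2 + s + 1 = 0 := by
  haveI : Fact p.Prime := ⟨hp⟩
  have hdvd : 3 ∣ Fintype.card (ZMod p)ˣ := by
    rw [ZMod.card_units]; have := hp.two_le; omega
  obtain ⟨u, hu⟩ := exists_prime_orderOf_dvd_card 3 hdvd
  refine ⟨(u : ZMod p), ?_⟩
  have hu3 : (u : ZMod p) ^ 3 = 1 := by
    have h : u ^ 3 = 1 := by rw [← hu]; exact pow_orderOf_eq_one u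
    have h2 := congrArg (Units.val) h
    simpa using h2
  have hu1 : (u : ZMod p) ≠ 1 := by
    intro h
    have : u = 1 := Units.ext h
    rw [this] at hu; simp at hu
  have hfac : ((u : ZMod p) - 1) * ((u : ZMod p) ^ 2 + u + 1) = 0 := by
    linear_combination hu3
  rcases mul_eq_zero.mp hfac with h | h
  · exact absurd (by linear_combination h) hu1
  · exact h

/-- For p ≡ 2 mod 3, the form is anisotropic mod p. -/
lemma dvd_of_mod_three_eq_two {p : ℕ} (hp : p.Prime) (h2 : p % 3 = 2) (a b : ℤ)
    (hd : (p : ℤ) ∣ a ^ 2 - a * b + b ^ 2) : (p : ℤ) ∣ a ∧ (p : ℤ) ∣ b := by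
  haveI : Fact p.Prime := ⟨hp⟩
  have h0 : (a : ZMod p) ^ 2 - (a : ZMod p) * (b : ZMod p) + (b : ZMod p) ^ 2 = 0 := by
    have := (ZMod.intCast_zmod_eq_zero_iff_dvd _ p).mpr hd
    push_cast at this
    linear_combination this
  by_cases hb : (b : ZMod p) = 0
  · have ha : (a : ZMod p) = 0 := by
      have h2' : (a : ZMod p) ^ 2 = 0 := by rw [hb] at h0; linear_combination h0
      exact pow_eq_zero_iff (by norm_num) |>.mp h2'
    exact ⟨(ZMod.intCast_zmod_eq_zero_iff_dvd _ _).mp ha,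
           (ZMod.intCast_zmod_eq_zero_iff_dvd _ _).mp hb⟩
  · exfalso
    set t : ZMod p := (a : ZMod p) * (b : ZMod p)⁻¹ with ht
    have htb : t * (b : ZMod p) = (a : ZMod p) := by
      rw [ht]; field_simp
    have hb2 : (b : ZMod p) ^ 2 ≠ 0 := pow_ne_zero _ hb
    have hq : (t ^ 2 - t + 1) * (b : ZMod p) ^ 2 = 0 := by
      calc (t ^ 2 - t + 1) * (b : ZMod p) ^ 2
          = (t * b) ^ 2 - (t * b) * b + b ^ 2 := by ring
        _ = 0 := by rw [htb]; exact h0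
    have ht0 : t ^ 2 - t + 1 = 0 := (mul_eq_zero.mp hq).resolve_right hb2
    have hs : (-t) ^ 2 + (-t) + 1 = 0 := by linear_combination ht0
    have := cube_aux hp (by omega) hs
    omega

lemma not_prime_int_sq {p : ℕ} (hp : p.Prime) (a : ℤ) (h : a ^ 2 = (p : ℤ)) : False := by
  have hna : (a.natAbs) ^ 2 = p := by
    have := congrArg Int.natAbs h
    rwa [Int.natAbs_pow, Int.natAbs_natCast] at this
  have hd : a.natAbs ∣ p := Dvd.intro _ (by rw [← hna]; ring)
  have h2 := hp.two_le
  rcases hp.eq_one_or_self_of_dvd _ hd with h1 | h1 <;> rw [h1] at hna <;> nlinarith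

lemma not_prime_int_three_sq {p : ℕ} (hp : p.Prime) (h1 : p % 3 = 1) (a : ℤ)
    (h : 3 * a ^ 2 = (p : ℤ)) : False := by
  have hd : (3 : ℤ) ∣ (p : ℤ) := Dvd.intro _ (by rw [← h])
  have : (3 : ℕ) ∣ p := by exact_mod_cast hd
  have := (Nat.prime_dvd_prime_iff_eq (by norm_num) hp).mp this
  omega

end NT

namespace Ei

theorem natAbs_Nm_natCast (n : ℕ) : Nm (n : Ei) = (n : ℤ) ^ 2 := by simp only [Nm, natCast_re, natCast_im]; ring

theorem prime_of_Nm_eq_prime {π : Ei} {p : ℕ} (hp : p.Prime) (hN : Nm π = p) : Prime π := by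
  apply prime_of_Nm_prime
  rw [hN, Int.natAbs_natCast]
  exact hp

/-- p ≡ 1 mod 3 is a norm. -/
theorem exists_Nm_eq {p : ℕ} (hp : p.Prime) (h1 : p % 3 = 1) : ∃ π : Ei, Nm π = p := by
  obtain ⟨s, hs⟩ := exists_cube_root hp h1
  haveI : Fact p.Prime := ⟨hp⟩
  set x : ℤ := (s.val : ℤ) with hx
  have hsx : ((x : ℤ) : ZMod p) = s := by
    rw [hx]; push_cast; simp [ZMod.natCast_val, ZMod.cast_id]
  have hdvd : (p : ℤ) ∣ x ^ 2 + x + 1 := by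
    rw [← ZMod.intCast_zmod_eq_zero_iff_dvd]
    push_cast
    rw [hsx]
    exact hs
  have hpZ : ¬Prime ((p : ℕ) : Ei) := by
    intro hpr
    have hNm : Nm ⟨x, -1⟩ = x ^ 2 + x + 1 := by simp only [Nm]; ring
    have hx1 : ((p : ℕ) : Ei) ∣ ⟨x, -1⟩ * conj ⟨x, -1⟩ := by
      rw [mul_conj, hNm]
      obtain ⟨k, hk⟩ := hdvd
      exact ⟨(k : Ei), by rw [hk]; push_cast; ring⟩
    rcases hpr.2.2 _ _ hx1 with hct | hct
    · obtain ⟨⟨c, d⟩, hcd⟩ := hct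
      have him : (-1 : ℤ) = p * d := by
        have := congrArg Ei.im hcd
        simpa using this
      have hdd : (p : ℤ) ∣ -1 := ⟨d, him⟩
      have := Int.le_of_dvd (by norm_num) ((dvd_neg).mp hdd)
      have := hp.two_le
      omega
    · obtain ⟨⟨c, d⟩, hcd⟩ := hct
      have him : (1 : ℤ) = p * d := by
        have := congrArg Ei.im hcd
        simpa using this
      have hdd : (p : ℤ) ∣ 1 := ⟨d, him⟩
      have := Int.le_of_dvd (by norm_num) hdd
      have := hp.two_le
      omega
  have hirr : ¬Irreducible ((p : ℕ) : Ei) := fun h => hpZ (irreducible_iff_prime.mp h)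
  have hpu : ¬IsUnit ((p : ℕ) : Ei) := by
    rw [isUnit_iff, natAbs_Nm_natCast]
    have := hp.two_le
    nlinarith [hp.two_le]
  obtain ⟨a, b, hab, hau, hbu⟩ : ∃ a b, ((p : ℕ) : Ei) = a * b ∧ ¬IsUnit a ∧ ¬IsUnit b := by
    simpa only [true_and, not_false_iff, exists_prop, irreducible_iff, hpu, not_forall, not_or]
      using hirr
  have hN : (Nm a).natAbs * (Nm b).natAbs = p ^ 2 := by
    rw [← Int.natAbs_mul, ← Nm_mul, ← hab, natAbs_Nm_natCast]
    rw [Int.natAbs_pow, Int.natAbs_natCast]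
  have ha0 := Nm_nonneg a
  have hb0 := Nm_nonneg b
  have hau' : (Nm a).natAbs ≠ 1 := fun h => hau (isUnit_iff.mpr (by omega))
  have hbu' : (Nm b).natAbs ≠ 1 := fun h => hbu (isUnit_iff.mpr (by omega))
  have := (hp.mul_eq_prime_sq_iff hau' hbu').mp hN
  exact ⟨a, by omega⟩

def lam : Ei := ⟨1, -1⟩

theorem Nm_lam : Nm lam = 3 := by simp [Nm, lam]

theorem lam_dvd {z : Ei} (h : (3 : ℤ) ∣ Nm z) : lam ∣ z := by
  have h3 : (3 : ℤ) ∣ z.re + z.im := by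
    have hsq : (z.re + z.im) ^ 2 = Nm z + 3 * (z.re * z.im) := by rw [Nm]; ring
    have h9 : (3 : ℤ) ∣ (z.re + z.im) ^ 2 := by
      rw [hsq]; exact dvd_add h (dvd_mul_right _ _)
    exact Int.Prime.dvd_pow' (by norm_num) h9
  obtain ⟨y, hy⟩ := h3
  exact ⟨⟨z.re - y, y⟩, by ext <;> simp [lam] <;> omega⟩

theorem not_dvd_conj {π : Ei} {p : ℕ} (hp : p.Prime) (h1 : p % 3 = 1) (hN : Nm π = p) :
    ¬ π ∣ conj π := by
  rintro ⟨u, hu⟩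
  have hNu : Nm u = 1 := by
    have hc := congrArg Nm hu
    rw [Nm_conj, Nm_mul, hN] at hc
    have hppos : (0 : ℤ) < p := by exact_mod_cast hp.pos
    nlinarith [Nm_nonneg u]
  obtain ⟨a, b⟩ := π
  have hre := congrArg Ei.re hu
  have him := congrArg Ei.im hu
  simp only [Nm] at hN
  rcases Nm_eq_one_iff.mp hNu with h | h | h | h | h | h <;> subst h <;>
    simp [conj] at hre him
  · have hb : b = 0 := by omega
    subst hb
    exact not_prime_int_sq hp a (by linarith)
  · have hb : b = 2 * a := by omega
    subst hb
    exact not_prime_int_three_sq hp h1 a (by linarith)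
  · have ha : a = 0 := by omega
    subst ha
    exact not_prime_int_sq hp b (by linarith)
  · have ha : a = 2 * b := by omega
    subst ha
    exact not_prime_int_three_sq hp h1 b (by linarith)
  · have ha : a = -b := by omega
    subst ha
    exact not_prime_int_three_sq hp h1 b (by linarith)
  · have ha : a = b := by omega
    subst ha
    exact not_prime_int_sq hp a (by linarith)

end Ei
namespace Ei

def S (n : ℕ) : Set Ei := {z | Nm z = (n : ℤ)}

theorem mem_S {n : ℕ} {z : Ei} : z ∈ S n ↔ Nm z = (n : ℤ) := Iff.rfl

theorem S_finite (n : ℕ) : (S n).Finite := by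
  set B : ℤ := (n : ℤ) + 1 with hB
  have hsub : S n ⊆ (fun p : ℤ × ℤ => (⟨p.1, p.2⟩ : Ei)) ''
      (Set.Icc (-B) B ×ˢ Set.Icc (-B) B) := by
    rintro ⟨a, b⟩ hz
    have hN : a ^ 2 - a * b + b ^ 2 = (n : ℤ) := hz
    have hn0 : (0 : ℤ) ≤ n := Int.natCast_nonneg n
    refine ⟨(a, b), ⟨⟨?_, ?_⟩, ⟨?_, ?_⟩⟩, rfl⟩ <;>
      nlinarith [sq_nonneg (2 * a - b), sq_nonneg (2 * b - a), sq_nonneg (a + (n : ℤ) + 1),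
        sq_nonneg (a - (n : ℤ) - 1), sq_nonneg (b + (n : ℤ) + 1), sq_nonneg (b - (n : ℤ) - 1)]
  exact Set.Finite.subset (Set.Finite.image _ (Set.Finite.prod (Set.finite_Icc _ _)
    (Set.finite_Icc _ _))) hsub

theorem ncard_S_eq_of_dvd_all {c : Ei} (hc : c ≠ 0) {k n' : ℕ}
    (hck : Nm c = (k : ℤ)) (hall : ∀ z ∈ S (k * n'), c ∣ z) :
    (S (k * n')).ncard = (S n').ncard := by
  have hk0 : (k : ℤ) ≠ 0 := by rw [← hck]; exact ne_of_gt (Nm_pos hc)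
  have himg : S (k * n') = (fun z => c * z) '' S n' := by
    ext z
    constructor
    · intro hz
      obtain ⟨w, rfl⟩ := hall z hz
      refine ⟨w, ?_, rfl⟩
      have h1 : Nm (c * w) = (k : ℤ) * (n' : ℤ) := by
        rw [mem_S] at hz; rw [hz]; push_cast; ring
      rw [Nm_mul, hck] at h1
      exact mul_left_cancel₀ hk0 h1
    · rintro ⟨w, hw, rfl⟩
      rw [mem_S] at hw ⊢
      rw [Nm_mul, hck, hw]; push_cast; ring
  rw [himg, Set.ncard_image_of_injective _ (mul_right_injective₀ hc)]

theorem conj_ne_zero {π : Ei} (h : π ≠ 0) : conj π ≠ 0 := by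
  intro hc
  apply h
  have := congrArg conj hc
  rwa [conj_conj] at this

theorem extract (π : Ei) (p : ℕ) (hπN : Nm π = (p : ℤ)) (hp0 : 0 < p) (hπp : Prime π) :
    ∀ (e m : ℕ) (z : Ei), Nm z = (p : ℤ) ^ e * (m : ℤ) →
      ∃ a, a ≤ e ∧ ∃ w, Nm w = (m : ℤ) ∧ z = π ^ a * conj π ^ (e - a) * w := by
  have hppi : π * conj π = ((p : ℤ) : Ei) := by rw [mul_conj, hπN]
  have hpZ0 : ((p : ℕ) : ℤ) ≠ 0 := by exact_mod_cast hp0.ne'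
  intro e
  induction e with
  | zero =>
    intro m z hz
    exact ⟨0, le_refl 0, z, by simpa using hz, by simp⟩
  | succ e ihe =>
    intro m z hz
    have hdvd : π ∣ z * conj z := by
      have hpd : (p : ℤ) ∣ Nm z := ⟨(p : ℤ) ^ e * m, by rw [hz]; ring⟩
      obtain ⟨k, hk⟩ := hpd
      refine ⟨conj π * (k : Ei), ?_⟩
      rw [mul_conj, hk, ← mul_assoc, hppi]
      push_cast
      ring
    rcases hπp.2.2 z (conj z) hdvd with hz1 | hz1
    · obtain ⟨z1, rfl⟩ := hz1
      have hz1N : Nm z1 = (p : ℤ) ^ e * m := by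
        rw [Nm_mul, hπN] at hz
        have h2 : (p : ℤ) * Nm z1 = (p : ℤ) * ((p : ℤ) ^ e * m) := by rw [hz]; ring
        exact mul_left_cancel₀ hpZ0 h2
      obtain ⟨a, ha, w, hw, rfl⟩ := ihe m z1 hz1N
      refine ⟨a + 1, by omega, w, hw, ?_⟩
      have he : e + 1 - (a + 1) = e - a := by omega
      rw [he]; ring
    · obtain ⟨t, ht⟩ := hz1
      have hzc : z = conj π * conj t := by
        have h2 := congrArg conj ht
        rwa [conj_conj, conj_mul] at h2
      obtain ⟨z1, rfl⟩ : conj π ∣ z := ⟨conj t, hzc⟩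
      have hz1N : Nm z1 = (p : ℤ) ^ e * m := by
        rw [Nm_mul, Nm_conj, hπN] at hz
        have h2 : (p : ℤ) * Nm z1 = (p : ℤ) * ((p : ℤ) ^ e * m) := by rw [hz]; ring
        exact mul_left_cancel₀ hpZ0 h2
      obtain ⟨a, ha, w, hw, rfl⟩ := ihe m z1 hz1N
      refine ⟨a, by omega, w, hw, ?_⟩
      have he : e + 1 - a = (e - a) + 1 := by omega
      rw [he]; ring

theorem inj_aux (π : Ei) (hπp : Prime π) (hππ' : ¬ π ∣ conj π) (e : ℕ)
    (a c : ℕ) (hac : a ≤ c) (hce : c ≤ e) (w w' : Ei) (hw : ¬ π ∣ w) (hw' : ¬ π ∣ w')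
    (heq : π ^ a * conj π ^ (e - a) * w = π ^ c * conj π ^ (e - c) * w') :
    a = c ∧ w = w' := by
  have hπ0 : π ≠ 0 := hπp.ne_zero
  have hconj0 : conj π ≠ 0 := conj_ne_zero hπ0
  have heq2 : conj π ^ (e - a) * w = π ^ (c - a) * (conj π ^ (e - c) * w') := by
    apply mul_left_cancel₀ (pow_ne_zero a hπ0)
    have hsplit : π ^ c = π ^ a * π ^ (c - a) := by
      rw [← pow_add]; congr 1; omega
    rw [hsplit] at heq
    calc π ^ a * (conj π ^ (e - a) * w) = π ^ a * conj π ^ (e - a) * w := by ring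
      _ = π ^ a * π ^ (c - a) * conj π ^ (e - c) * w' := heq
      _ = π ^ a * (π ^ (c - a) * (conj π ^ (e - c) * w')) := by ring
  have hac2 : a = c := by
    by_contra hne
    have hcpos : 0 < c - a := by omega
    have hd : π ∣ conj π ^ (e - a) * w := by
      rw [heq2]
      have : π ^ (c - a) = π * π ^ (c - a - 1) := by
        rw [← pow_succ']; congr 1; omega
      rw [this]
      exact ⟨π ^ (c - a - 1) * (conj π ^ (e - c) * w'), by ring⟩
    rcases hπp.2.2 _ _ hd with h | h
    · exact hππ' (hπp.dvd_of_dvd_pow h)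
    · exact hw h
  subst hac2
  refine ⟨rfl, ?_⟩
  apply mul_left_cancel₀ (pow_ne_zero (e - a) hconj0)
  simpa using heq2

theorem Nm_pow (z : Ei) (k : ℕ) : Nm (z ^ k) = Nm z ^ k := by
  induction k with
  | zero => simp [Nm]
  | succ k ih => rw [pow_succ, Nm_mul, ih, pow_succ]

theorem ncard_S_pow_mul {p : ℕ} (hp : p.Prime) (h1 : p % 3 = 1) (e m : ℕ) (hm : ¬ p ∣ m) :
    (S (p ^ e * m)).ncard = (e + 1) * (S m).ncard := by
  obtain ⟨π, hπN⟩ := exists_Nm_eq hp h1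
  have hπp : Prime π := prime_of_Nm_eq_prime hp hπN
  have hππ' : ¬ π ∣ conj π := not_dvd_conj hp h1 hπN
  have hπ0 : π ≠ 0 := hπp.ne_zero
  have hπm : ∀ w : Ei, Nm w = (m : ℤ) → ¬ π ∣ w := by
    rintro w hw ⟨t, rfl⟩
    rw [Nm_mul, hπN] at hw
    apply hm
    have hdp : (p : ℤ) ∣ (m : ℤ) := ⟨Nm t, hw.symm⟩
    exact_mod_cast hdp
  have hNf : ∀ x : Fin (e + 1) × ↥(S m),
      (π ^ (x.1 : ℕ) * conj π ^ (e - (x.1 : ℕ)) * (x.2 : Ei)) ∈ S (p ^ e * m) := by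
    rintro ⟨⟨a, ha⟩, ⟨w, hw⟩⟩
    rw [mem_S] at hw ⊢
    simp only
    rw [Nm_mul, Nm_mul, Nm_pow, Nm_pow, Nm_conj, hπN, hw, ← pow_add]
    have hae : a + (e - a) = e := by omega
    rw [hae]
    push_cast
    ring
  set f : Fin (e + 1) × ↥(S m) → ↥(S (p ^ e * m)) := fun x =>
    ⟨π ^ (x.1 : ℕ) * conj π ^ (e - (x.1 : ℕ)) * (x.2 : Ei), hNf x⟩ with hf
  have hbij : Function.Bijective f := by
    constructor
    · rintro ⟨⟨a, ha⟩, ⟨w, hw⟩⟩ ⟨⟨c, hc⟩, ⟨w', hw'⟩⟩ heq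
      have heq' : π ^ a * conj π ^ (e - a) * w = π ^ c * conj π ^ (e - c) * w' := by
        have := congrArg (Subtype.val) heq
        simpa [hf] using this
      have hwP := hπm w hw
      have hwQ := hπm w' hw'
      rcases le_total a c with hle | hle
      · obtain ⟨h1', h2'⟩ := inj_aux π hπp hππ' e a c hle (by omega) w w' hwP hwQ heq'
        subst h1'
        simp [h2']
      · obtain ⟨h1', h2'⟩ := inj_aux π hπp hππ' e c a hle (by omega) w' w hwQ hwP heq'.symm
        subst h1'
        simp [h2'.symm]
    · rintro ⟨z, hz⟩
      rw [mem_S] at hz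
      have hz' : Nm z = (p : ℤ) ^ e * (m : ℤ) := by rw [hz]; push_cast; ring
      obtain ⟨a, ha, w, hw, rfl⟩ := extract π p hπN hp.pos hπp e m z hz'
      exact ⟨⟨⟨a, by omega⟩, ⟨w, hw⟩⟩, rfl⟩
  have hcard := Nat.card_congr (Equiv.ofBijective f hbij)
  rw [← Nat.card_coe_set_eq, ← Nat.card_coe_set_eq, ← hcard, Nat.card_prod,
    Nat.card_eq_fintype_card, Fintype.card_fin]

end Ei
namespace Ei

theorem ncard_S_one : (S 1).ncard = 6 := by
  have hset : S 1 =
      (↑({⟨1, 0⟩, ⟨-1, 0⟩, ⟨0, 1⟩, ⟨0, -1⟩, ⟨1, 1⟩, ⟨-1, -1⟩} : Finset Ei) : Set Ei) := by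
    ext z
    rw [mem_S, Nat.cast_one, Nm_eq_one_iff]
    simp
  rw [hset, Set.ncard_coe_finset]
  decide

theorem prod_rhs_transfer {n n' : ℕ}
    (hsame : ∀ q, q % 3 = 1 → n'.factorization q = n.factorization q) :
    ∏ p ∈ n'.primeFactors.filter (fun p => p % 3 = 1), (n'.factorization p + 1) =
      ∏ p ∈ n.primeFactors.filter (fun p => p % 3 = 1), (n.factorization p + 1) := by
  have hset : n'.primeFactors.filter (fun p => p % 3 = 1) =
      n.primeFactors.filter (fun p => p % 3 = 1) := by
    ext q
    simp only [Finset.mem_filter, ← Nat.support_factorization, Finsupp.mem_support_iff]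
    constructor
    · rintro ⟨h1, h2⟩; exact ⟨by rwa [hsame q h2] at h1, h2⟩
    · rintro ⟨h1, h2⟩; exact ⟨by rwa [hsame q h2], h2⟩
  rw [hset]
  exact Finset.prod_congr rfl fun q hq => by rw [hsame q (Finset.mem_filter.mp hq).2]

theorem factorization_transfer {d k n n' : ℕ} (hd : d.Prime) (hn' : n' ≠ 0)
    (hmul : n = d ^ k * n') : ∀ q, q ≠ d → n.factorization q = n'.factorization q := by
  intro q hq
  subst hmul
  rw [Nat.factorization_mul (pow_ne_zero _ hd.pos.ne') hn', Finsupp.add_apply,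
    hd.factorization_pow, Finsupp.single_apply, if_neg (Ne.symm hq), zero_add]

theorem factorization_at {d k n n' : ℕ} (hd : d.Prime) (hn' : n' ≠ 0)
    (hmul : n = d ^ k * n') : n.factorization d = k + n'.factorization d := by
  subst hmul
  rw [Nat.factorization_mul (pow_ne_zero _ hd.pos.ne') hn', Finsupp.add_apply,
    hd.factorization_pow, Finsupp.single_apply, if_pos rfl]

theorem main (n : ℕ) : 0 < n →
    (∀ q : ℕ, q.Prime → q % 3 = 2 → Even (n.factorization q)) →
    (S n).ncard =
      6 * ∏ p ∈ n.primeFactors.filter (fun p => p % 3 = 1), (n.factorization p + 1) := by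
  induction n using Nat.strong_induction_on with
  | _ n ih =>
  intro hn h
  by_cases hn1 : n = 1
  · subst hn1
    rw [Nat.primeFactors_one]
    simp [ncard_S_one]
  -- n ≥ 2
  set p := n.minFac with hpdef
  have hp : p.Prime := Nat.minFac_prime hn1
  have hpd : p ∣ n := Nat.minFac_dvd n
  have h3 : p % 3 = 0 ∨ p % 3 = 1 ∨ p % 3 = 2 := by omega
  rcases h3 with h0 | h1 | h2
  · -- p = 3
    have hp3 : p = 3 := ((Nat.prime_dvd_prime_iff_eq (by norm_num) hp).mp
      (Nat.dvd_of_mod_eq_zero h0)).symm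
    have h3d : (3 : ℕ) ∣ n := hp3 ▸ hpd
    set n' := n / 3 with hn'def
    have hmul : n = 3 * n' := (Nat.mul_div_cancel' h3d).symm
    have hn'0 : n' ≠ 0 := by
      intro h0'; rw [h0'] at hmul; omega
    have hlt : n' < n := by omega
    have hfq : ∀ q, q ≠ 3 → n.factorization q = n'.factorization q :=
      factorization_transfer (by norm_num) hn'0 (by rw [hmul, pow_one])
    have h' : ∀ q : ℕ, q.Prime → q % 3 = 2 → Even (n'.factorization q) := by
      intro q hq hq2
      rw [← hfq q (by omega)]
      exact h q hq hq2
    have hcard : (S n).ncard = (S n').ncard := by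
      rw [hmul]
      apply ncard_S_eq_of_dvd_all (c := lam) (by decide) (k := 3) Nm_lam
      intro z hz
      apply lam_dvd
      rw [mem_S] at hz
      rw [hz]
      exact ⟨(n' : ℤ), by push_cast; ring⟩
    rw [hcard, ih n' hlt (Nat.pos_of_ne_zero hn'0) h']
    congr 1
    apply prod_rhs_transfer
    intro q hq
    exact (hfq q (by omega)).symm
  · -- p ≡ 1 mod 3
    set e := n.factorization p with hedef
    have he1 : 1 ≤ e := hp.factorization_pos_of_dvd (by omega) hpd
    set m := n / p ^ e with hmdef
    have hmul : n = p ^ e * m := (Nat.ordProj_mul_ordCompl_eq_self n p).symm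
    have hm0 : m ≠ 0 := by
      intro h0'; rw [h0'] at hmul; omega
    have hmdvd : ¬ p ∣ m := Nat.not_dvd_ordCompl hp (by omega)
    have hpe2 : 2 ≤ p ^ e := by
      calc 2 ≤ p := hp.two_le
      _ ≤ p ^ e := Nat.le_self_pow (by omega) p
    have hlt : m < n := by nlinarith [Nat.pos_of_ne_zero hm0]
    have hfq : ∀ q, q ≠ p → n.factorization q = m.factorization q :=
      factorization_transfer hp hm0 hmul
    have hfmp : m.factorization p = 0 := by
      have := factorization_at hp hm0 hmul
      omega
    have h' : ∀ q : ℕ, q.Prime → q % 3 = 2 → Even (m.factorization q) := by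
      intro q hq hq2
      rw [← hfq q (by omega)]
      exact h q hq hq2
    have hpnot : p ∉ m.primeFactors := fun hmem =>
      hmdvd (Nat.dvd_of_mem_primeFactors hmem)
    have hseteq : n.primeFactors.filter (fun q => q % 3 = 1) =
        insert p (m.primeFactors.filter (fun q => q % 3 = 1)) := by
      ext q
      simp only [Finset.mem_filter, Finset.mem_insert, ← Nat.support_factorization,
        Finsupp.mem_support_iff]
      by_cases hqp : q = p
      · subst hqp
        have hne : n.factorization p ≠ 0 := by omega
        simp [h1, hne]
      · rw [hfq q hqp]
        constructor
        · rintro ⟨ha, hb⟩; exact Or.inr ⟨ha, hb⟩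
        · rintro (hc | ⟨ha, hb⟩)
          · exact absurd hc hqp
          · exact ⟨ha, hb⟩
    have hpnotf : p ∉ m.primeFactors.filter (fun q => q % 3 = 1) :=
      fun hmem => hpnot (Finset.mem_filter.mp hmem).1
    have hprodeq : ∏ q ∈ n.primeFactors.filter (fun q => q % 3 = 1), (n.factorization q + 1) =
        (e + 1) * ∏ q ∈ m.primeFactors.filter (fun q => q % 3 = 1), (m.factorization q + 1) := by
      rw [hseteq, Finset.prod_insert hpnotf]
      congr 1
      apply Finset.prod_congr rfl
      intro q hq
      have hqm : q ∈ m.primeFactors := (Finset.mem_filter.mp hq).1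
      have hqp : q ≠ p := by
        intro hqp'; subst hqp'; exact hpnot hqm
      rw [hfq q hqp]
    have hSn : (S n).ncard = (S (p ^ e * m)).ncard := by rw [← hmul]
    rw [hSn, ncard_S_pow_mul hp h1 e m hmdvd, ih m hlt (Nat.pos_of_ne_zero hm0) h', hprodeq]
    ring
  · -- p ≡ 2 mod 3
    set k := n.factorization p with hkdef
    have hke : Even k := h p hp h2
    have hk1 : 1 ≤ k := hp.factorization_pos_of_dvd (by omega) hpd
    have hk2 : 2 ≤ k := by
      rcases hke with ⟨r, hr⟩; omega
    have hp2d : p ^ 2 ∣ n := (hp.pow_dvd_iff_le_factorization (by omega)).mpr hk2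
    set n' := n / p ^ 2 with hn'def
    have hmul : n = p ^ 2 * n' := (Nat.mul_div_cancel' hp2d).symm
    have hn'0 : n' ≠ 0 := by
      intro h0'; rw [h0'] at hmul; omega
    have hp4 : 4 ≤ p ^ 2 := by nlinarith [hp.two_le]
    have hlt : n' < n := by nlinarith [Nat.pos_of_ne_zero hn'0]
    have hfq : ∀ q, q ≠ p → n.factorization q = n'.factorization q :=
      factorization_transfer hp hn'0 hmul
    have hfp : n.factorization p = 2 + n'.factorization p := factorization_at hp hn'0 hmul
    have h' : ∀ q : ℕ, q.Prime → q % 3 = 2 → Even (n'.factorization q) := by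
      intro q hq hq2
      by_cases hqp : q = p
      · subst hqp
        have := h p hq hq2
        rcases this with ⟨r, hr⟩
        exact ⟨r - 1, by omega⟩
      · rw [← hfq q hqp]; exact h q hq hq2
    have hall : ∀ z ∈ S (p ^ 2 * n'), ((p : ℕ) : Ei) ∣ z := by
      intro z hz
      rw [mem_S] at hz
      have hdvd : (p : ℤ) ∣ z.re ^ 2 - z.re * z.im + z.im ^ 2 := by
        show (p : ℤ) ∣ Nm z
        rw [hz]
        exact ⟨(p : ℤ) * n', by push_cast; ring⟩
      obtain ⟨hre, him⟩ := dvd_of_mod_three_eq_two hp h2 z.re z.im hdvd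
      obtain ⟨u, hu⟩ := hre
      obtain ⟨v, hv⟩ := him
      exact ⟨⟨u, v⟩, by ext <;> simp [hu, hv]⟩
    have hcard : (S n).ncard = (S n').ncard := by
      rw [hmul]
      apply ncard_S_eq_of_dvd_all (c := ((p : ℕ) : Ei)) ?_ (k := p ^ 2) ?_ hall
      · intro hc
        have := congrArg Ei.re hc
        simp at this
        exact hp.pos.ne' this
      · rw [natAbs_Nm_natCast]; push_cast; ring
    rw [hcard, ih n' hlt (Nat.pos_of_ne_zero hn'0) h']
    congr 1
    apply prod_rhs_transfer
    intro q hq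
    exact (hfq q (by omega)).symm

end Ei
theorem stmt_1 (n : ℕ) (hn : 0 < n)
    (h : ∀ q : ℕ, q.Prime → q % 3 = 2 → Even (n.factorization q)) :
    {z : ℤ × ℤ | z.1 ^ 2 + z.1 * z.2 + z.2 ^ 2 = (n : ℤ)}.Finite ∧
      {z : ℤ × ℤ | z.1 ^ 2 + z.1 * z.2 + z.2 ^ 2 = (n : ℤ)}.ncard =
        6 * ∏ p ∈ n.primeFactors.filter (fun p => p % 3 = 1), (n.factorization p + 1) := by
  have hinj : Function.Injective (fun w : Ei => (w.re, -w.im)) := by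
    intro x y hxy
    simp only [Prod.mk.injEq] at hxy
    ext
    · exact hxy.1
    · omega
  have hmap : {z : ℤ × ℤ | z.1 ^ 2 + z.1 * z.2 + z.2 ^ 2 = (n : ℤ)} =
      (fun w : Ei => (w.re, -w.im)) '' Ei.S n := by
    ext ⟨a, b⟩
    simp only [Set.mem_setOf_eq, Set.mem_image]
    constructor
    · intro hab
      refine ⟨⟨a, -b⟩, ?_, by simp⟩
      rw [Ei.mem_S]
      show a ^ 2 - a * (-b) + (-b) ^ 2 = (n : ℤ)
      linear_combination hab
    · rintro ⟨w, hw, heq⟩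
      rw [Ei.mem_S] at hw
      obtain ⟨h1, h2⟩ : w.re = a ∧ -w.im = b := by
        simpa [Prod.ext_iff] using heq
      subst h1
      subst h2
      have hw' : w.re ^ 2 - w.re * w.im + w.im ^ 2 = (n : ℤ) := hw
      show w.re ^ 2 + w.re * (-w.im) + (-w.im) ^ 2 = (n : ℤ)
      linear_combination hw'
  constructor
  · rw [hmap]; exact (Ei.S_finite n).image _
  · rw [hmap, Set.ncard_image_of_injective _ hinj]
    exact Ei.main n hn h
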